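/- Orthogonality of the Krawtchouk polynomials with respect to the binomial weight: for all l, m ∈ {0,1,…,N}, Σ_{x=0}^{N} K_l(x) · K_m(x) · ω(x) = δ_{l,m} / π_l, where δ_{l,m} is the Kronecker delta. -/

import Mathlib

open Finset

/-- The Krawtchouk polynomial `K_l(x; N; p)`, defined via the hypergeometric sum. -/
noncomputable def krawtchouk (N : ℕ) (p : ℝ) (l x : ℕ) : ℝ :=
  ∑ k ∈ Finset.range (N + 1),
    ((ascPochhammer ℝ k).eval (-(l : ℝ)) * (ascPochhammer ℝ k).eval (-(x : ℝ))) /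
      ((ascPochhammer ℝ k).eval (-(N : ℝ)) * (Nat.factorial k : ℝ)) * (1 / p) ^ k

/-- The binomial weight `ω(x) = C(N,x) p^x q^{N-x}`. -/
noncomputable def binomWeight (N : ℕ) (p q : ℝ) (x : ℕ) : ℝ :=
  (N.choose x : ℝ) * p ^ x * q ^ (N - x)

/-- `π_l = C(N,l) (p/q)^l`. -/
noncomputable def krawtchoukNorm (N : ℕ) (p q : ℝ) (l : ℕ) : ℝ :=
  (N.choose l : ℝ) * (p / q) ^ l


lemma ascPochhammer_eval_neg_nat (k n : ℕ) :
    (ascPochhammer ℝ k).eval (-(n : ℝ)) = (-1)^k * (Nat.factorial k) * (n.choose k) := by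
  induction k with
  | zero => simp
  | succ k ih =>
      rw [ascPochhammer_succ_right]
      simp only [Polynomial.eval_mul, Polynomial.eval_add, Polynomial.eval_X,
        Polynomial.eval_natCast, ih]
      have h : ((k.factorial : ℝ)) * (n.choose k) * ((n:ℝ) - k)
          = ((k+1).factorial) * (n.choose (k+1)) := by
        rcases le_or_gt k n with h | h
        · have h2 := Nat.choose_succ_right_eq n k
          have h2' : ((n.choose (k+1) : ℕ) : ℝ) * (k+1) = (n.choose k : ℝ) * ((n:ℝ) - k) := by
            have := congrArg (Nat.cast (R := ℝ)) h2
            push_cast [Nat.cast_sub h] at this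
            linarith [this]
          rw [Nat.factorial_succ]
          push_cast
          nlinarith [h2']
        · have h1 : n.choose k = 0 := Nat.choose_eq_zero_of_lt h
          have h2 : n.choose (k+1) = 0 := Nat.choose_eq_zero_of_lt (Nat.lt_succ_of_lt h)
          simp [h1, h2]
      rw [pow_succ]
      push_cast
      linear_combination (-(-1:ℝ)^k) * h


lemma krawtchouk_eq (N : ℕ) (p : ℝ) (l x : ℕ) :
    krawtchouk N p l x = ∑ k ∈ range (N+1),
      (-1)^k * (l.choose k) * (x.choose k) / (N.choose k) * (1/p)^k := by
  unfold krawtchouk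
  refine Finset.sum_congr rfl fun k hk => ?_
  have hkN : k ≤ N := Nat.lt_succ_iff.mp (mem_range.mp hk)
  have hC : (N.choose k : ℝ) ≠ 0 := Nat.cast_ne_zero.mpr (Nat.choose_pos hkN).ne'
  have hf : (k.factorial : ℝ) ≠ 0 := Nat.cast_ne_zero.mpr k.factorial_ne_zero
  have hne : ((-1:ℝ))^k ≠ 0 := pow_ne_zero _ (by norm_num)
  rw [ascPochhammer_eval_neg_nat, ascPochhammer_eval_neg_nat, ascPochhammer_eval_neg_nat]
  have ha : ((-1:ℝ))^k * k.factorial * k.factorial ≠ 0 := by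
    exact mul_ne_zero (mul_ne_zero hne hf) hf
  have hnum : ((-1:ℝ))^k * k.factorial * (l.choose k) * ((-1)^k * k.factorial * (x.choose k))
      = ((-1)^k * k.factorial * k.factorial) * ((-1)^k * ((l.choose k) * (x.choose k))) := by
    ring
  have hden : ((-1:ℝ))^k * k.factorial * (N.choose k) * k.factorial
      = ((-1)^k * k.factorial * k.factorial) * (N.choose k) := by
    ring
  rw [hnum, hden, mul_div_mul_left _ _ ha]
  ring

lemma sum_choose_mul (N k : ℕ) (hk : k ≤ N) (s : ℝ) :
    ∑ l ∈ range (N+1), (N.choose l : ℝ) * (l.choose k) * s^l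
      = (N.choose k) * s^k * (1+s)^(N-k) := by
  have h1 : ∑ l ∈ range (N+1), (N.choose l : ℝ) * (l.choose k) * s^l
      = ∑ l ∈ Finset.Ico k (N+1), (N.choose l : ℝ) * (l.choose k) * s^l := by
    refine (Finset.sum_subset (fun l hlm => ?_) (fun l hl hnl => ?_)).symm
    · exact mem_range.mpr (mem_Ico.mp hlm).2
    · have : l < k := by
        by_contra hc
        exact hnl (mem_Ico.mpr ⟨le_of_not_gt hc, mem_range.mp hl⟩)
      simp [Nat.choose_eq_zero_of_lt this]
  rw [h1, Finset.sum_Ico_eq_sum_range]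
  have h2 : N + 1 - k = (N - k) + 1 := by omega
  rw [h2]
  have h3 : ∀ j ∈ range (N - k + 1),
      (N.choose (k+j) : ℝ) * ((k+j).choose k) * s^(k+j)
        = (N.choose k : ℝ) * (s^j * (1:ℝ)^(N-k-j) * ((N-k).choose j)) * s^k := by
    intro j hj
    have hjN : k + j ≤ N := by
      have := mem_range.mp hj; omega
    have := Nat.choose_mul (n := N) (Nat.le_add_right k j)
    have hcast : (N.choose (k+j) : ℝ) * ((k+j).choose k) = (N.choose k : ℝ) * ((N-k).choose (k+j-k)) := by
      exact_mod_cast congrArg (Nat.cast (R := ℝ)) this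
    rw [Nat.add_sub_cancel_left] at hcast
    rw [pow_add, one_pow]
    linear_combination (s^k * s^j) * hcast
  rw [Finset.sum_congr rfl h3, ← Finset.sum_mul, ← Finset.mul_sum]
  rw [← add_pow]
  ring


lemma krawtchouk_gf (N : ℕ) (p q : ℝ) (hp : p ≠ 0) (hq : q = 1 - p)
    (x : ℕ) (hx : x ≤ N) (s : ℝ) :
    ∑ l ∈ range (N+1), (N.choose l : ℝ) * krawtchouk N p l x * s^l
      = (1 - s*q/p)^x * (1+s)^(N-x) := by
  have step1 : ∑ l ∈ range (N+1), (N.choose l : ℝ) * krawtchouk N p l x * s^l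
      = ∑ k ∈ range (N+1), ∑ l ∈ range (N+1),
          ((N.choose l : ℝ) * (l.choose k) * s^l) *
            ((-1)^k * (x.choose k) / (N.choose k) * (1/p)^k) := by
    rw [Finset.sum_comm]
    refine Finset.sum_congr rfl fun l _ => ?_
    rw [krawtchouk_eq, Finset.mul_sum, Finset.sum_mul]
    refine Finset.sum_congr rfl fun k _ => ?_
    ring
  rw [step1]
  have step2 : ∀ k ∈ range (N+1),
      ∑ l ∈ range (N+1), ((N.choose l : ℝ) * (l.choose k) * s^l) *
          ((-1)^k * (x.choose k) / (N.choose k) * (1/p)^k)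
        = (x.choose k : ℝ) * (-(s/p))^k * (1+s)^(N-k) := by
    intro k hk
    have hkN : k ≤ N := Nat.lt_succ_iff.mp (mem_range.mp hk)
    have hC : (N.choose k : ℝ) ≠ 0 := Nat.cast_ne_zero.mpr (Nat.choose_pos hkN).ne'
    rw [← Finset.sum_mul, sum_choose_mul N k hkN s]
    have hpow : (-(s/p))^k = (-1)^k * (s^k * (1/p)^k) := by
      rw [show -(s/p) = (-1) * (s * (1/p)) from by ring, mul_pow, mul_pow]
    rw [hpow]
    field_simp
  rw [Finset.sum_congr rfl step2]
  have step3 : ∑ k ∈ range (N+1), (x.choose k : ℝ) * (-(s/p))^k * (1+s)^(N-k)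
      = ∑ k ∈ range (x+1), (x.choose k : ℝ) * (-(s/p))^k * (1+s)^(N-k) := by
    refine (Finset.sum_subset (fun k hkm => ?_) (fun k _ hnk => ?_)).symm
    · exact mem_range.mpr (Nat.lt_succ_of_le (le_trans (Nat.lt_succ_iff.mp (mem_range.mp hkm)) hx))
    · have : x < k := by
        by_contra hc
        exact hnk (mem_range.mpr (Nat.lt_succ_of_le (le_of_not_gt hc)))
      simp [Nat.choose_eq_zero_of_lt this]
  rw [step3]
  have step4 : ∀ k ∈ range (x+1),
      (x.choose k : ℝ) * (-(s/p))^k * (1+s)^(N-k)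
        = ((-(s/p))^k * (1+s)^(x-k) * (x.choose k)) * (1+s)^(N-x) := by
    intro k hk
    have hkx : k ≤ x := Nat.lt_succ_iff.mp (mem_range.mp hk)
    have : N - k = (x - k) + (N - x) := by omega
    rw [this, pow_add]
    ring
  rw [Finset.sum_congr rfl step4, ← Finset.sum_mul, ← add_pow]
  have : -(s/p) + (1+s) = 1 - s*q/p := by
    subst hq; field_simp; ring
  rw [this]

lemma cross_sum (N : ℕ) (p q : ℝ) (hp : p ≠ 0) (hq : q = 1 - p) (s t : ℝ) :
    ∑ x ∈ range (N+1),
        binomWeight N p q x * ((1 - s*q/p)^x * (1+s)^(N-x)) * ((1 - t*q/p)^x * (1+t)^(N-x))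
      = (1 + s*t*(q/p))^N := by
  have key : (p*(1 - s*q/p)*(1 - t*q/p)) + (q*(1+s)*(1+t)) = 1 + s*t*(q/p) := by
    subst hq; field_simp; ring
  have step : ∀ x ∈ range (N+1),
      binomWeight N p q x * ((1 - s*q/p)^x * (1+s)^(N-x)) * ((1 - t*q/p)^x * (1+t)^(N-x))
        = (p*(1 - s*q/p)*(1 - t*q/p))^x * (q*(1+s)*(1+t))^(N-x) * (N.choose x) := by
    intro x _
    unfold binomWeight
    simp only [mul_pow]
    ring
  rw [Finset.sum_congr rfl step, ← add_pow, key]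



lemma coeff_ext {n : ℕ} {a b : ℕ → ℝ}
    (h : ∀ t : ℝ, ∑ i ∈ range n, a i * t^i = ∑ i ∈ range n, b i * t^i)
    {j : ℕ} (hj : j < n) : a j = b j := by
  have hP : (∑ i ∈ range n, Polynomial.C (a i) * Polynomial.X ^ i)
      = (∑ i ∈ range n, Polynomial.C (b i) * Polynomial.X ^ i) := by
    apply Polynomial.funext
    intro t
    simpa [Polynomial.eval_finset_sum] using h t
  have := congrArg (fun P => Polynomial.coeff P j) hP
  simpa [Polynomial.finset_sum_coeff, Polynomial.coeff_C_mul, Polynomial.coeff_X_pow,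
    Finset.sum_ite_eq, hj] using this


lemma half_orth (N : ℕ) (p q : ℝ) (hp : p ≠ 0) (hq : q = 1 - p)
    (l : ℕ) (hl : l ≤ N) (t : ℝ) :
    ∑ x ∈ range (N+1),
        binomWeight N p q x * krawtchouk N p l x * ((1 - t*q/p)^x * (1+t)^(N-x))
      = (t*(q/p))^l := by
  have hCl : (N.choose l : ℝ) ≠ 0 := Nat.cast_ne_zero.mpr (Nat.choose_pos hl).ne'
  have key : ∀ s : ℝ,
      ∑ l' ∈ range (N+1),
          ((N.choose l' : ℝ) * ∑ x ∈ range (N+1),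
            binomWeight N p q x * krawtchouk N p l' x * ((1 - t*q/p)^x * (1+t)^(N-x))) * s^l'
        = ∑ l' ∈ range (N+1),
            ((N.choose l' : ℝ) * (t*(q/p))^l') * s^l' := by
    intro s
    have lhs_eq : ∑ l' ∈ range (N+1),
        ((N.choose l' : ℝ) * ∑ x ∈ range (N+1),
          binomWeight N p q x * krawtchouk N p l' x * ((1 - t*q/p)^x * (1+t)^(N-x))) * s^l'
        = ∑ x ∈ range (N+1),
            binomWeight N p q x * ((1 - s*q/p)^x * (1+s)^(N-x))
              * ((1 - t*q/p)^x * (1+t)^(N-x)) := by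
      have swap : ∑ l' ∈ range (N+1),
          ((N.choose l' : ℝ) * ∑ x ∈ range (N+1),
            binomWeight N p q x * krawtchouk N p l' x * ((1 - t*q/p)^x * (1+t)^(N-x))) * s^l'
          = ∑ x ∈ range (N+1), ∑ l' ∈ range (N+1),
              (binomWeight N p q x * ((1 - t*q/p)^x * (1+t)^(N-x)))
                * ((N.choose l' : ℝ) * krawtchouk N p l' x * s^l') := by
        rw [Finset.sum_comm]
        refine Finset.sum_congr rfl fun l' _ => ?_
        rw [Finset.mul_sum, Finset.sum_mul]
        refine Finset.sum_congr rfl fun x _ => ?_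
        ring
      rw [swap]
      refine Finset.sum_congr rfl fun x hx => ?_
      rw [← Finset.mul_sum, krawtchouk_gf N p q hp hq x (Nat.lt_succ_iff.mp (mem_range.mp hx)) s]
      ring
    have rhs_eq : (1 + s*t*(q/p))^N
        = ∑ l' ∈ range (N+1), ((N.choose l' : ℝ) * (t*(q/p))^l') * s^l' := by
      rw [show (1 : ℝ) + s*t*(q/p) = s*(t*(q/p)) + 1 from by ring, add_pow]
      refine Finset.sum_congr rfl fun l' _ => ?_
      rw [mul_pow, one_pow]
      ring
    rw [lhs_eq, cross_sum N p q hp hq s t, rhs_eq]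
  have := coeff_ext key (Nat.lt_succ_of_le hl)
  exact mul_left_cancel₀ hCl this

theorem krawtchouk_orthogonality (N : ℕ) (p : ℝ) (hp : 0 < p) (hp1 : p < 1)
    (q : ℝ) (hq : q = 1 - p) (l m : ℕ) (hl : l ≤ N) (hm : m ≤ N) :
    ∑ x ∈ Finset.range (N + 1),
        krawtchouk N p l x * krawtchouk N p m x * binomWeight N p q x =
      (if l = m then (1 : ℝ) else 0) / krawtchoukNorm N p q l := by
  have hp0 : p ≠ 0 := hp.ne'
  have hq0 : q ≠ 0 := by rw [hq]; linarith
  have hCl : (N.choose l : ℝ) ≠ 0 := Nat.cast_ne_zero.mpr (Nat.choose_pos hl).ne'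
  have hCm : (N.choose m : ℝ) ≠ 0 := Nat.cast_ne_zero.mpr (Nat.choose_pos hm).ne'
  set S : ℕ → ℝ := fun m' =>
    ∑ x ∈ Finset.range (N + 1),
      krawtchouk N p l x * krawtchouk N p m' x * binomWeight N p q x with hS
  have key : ∀ t : ℝ,
      ∑ m' ∈ range (N+1), ((N.choose m' : ℝ) * S m') * t^m'
        = ∑ m' ∈ range (N+1), (if m' = l then (q/p)^l else 0) * t^m' := by
    intro t
    have lhs_eq : ∑ m' ∈ range (N+1), ((N.choose m' : ℝ) * S m') * t^m'
        = ∑ x ∈ range (N+1),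
            binomWeight N p q x * krawtchouk N p l x * ((1 - t*q/p)^x * (1+t)^(N-x)) := by
      have swap : ∑ m' ∈ range (N+1), ((N.choose m' : ℝ) * S m') * t^m'
          = ∑ x ∈ range (N+1), ∑ m' ∈ range (N+1),
              (binomWeight N p q x * krawtchouk N p l x)
                * ((N.choose m' : ℝ) * krawtchouk N p m' x * t^m') := by
        rw [Finset.sum_comm]
        refine Finset.sum_congr rfl fun m' _ => ?_
        rw [hS]
        rw [Finset.mul_sum, Finset.sum_mul]
        refine Finset.sum_congr rfl fun x _ => ?_
        ring
      rw [swap]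
      refine Finset.sum_congr rfl fun x hx => ?_
      rw [← Finset.mul_sum, krawtchouk_gf N p q hp0 hq x (Nat.lt_succ_iff.mp (mem_range.mp hx)) t]
    have rhs_eq : ∑ m' ∈ range (N+1), (if m' = l then (q/p)^l else 0) * t^m'
        = (t*(q/p))^l := by
      have : ∀ m' ∈ range (N+1),
          (if m' = l then (q/p)^l else 0) * t^m'
            = if m' = l then (q/p)^l * t^m' else 0 := by
        intro m' _
        split <;> simp
      rw [Finset.sum_congr rfl this, Finset.sum_ite_eq' (range (N+1)) l (fun m' => (q/p)^l * t^m')]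
      rw [if_pos (mem_range.mpr (Nat.lt_succ_of_le hl)), mul_pow]
      ring
    rw [lhs_eq, rhs_eq, half_orth N p q hp0 hq l hl t]
  have hcoeff := coeff_ext key (Nat.lt_succ_of_le hm)
  -- hcoeff : (N.choose m) * S m = if m = l then (q/p)^l else 0
  by_cases hlm : l = m
  · subst hlm
    rw [if_pos rfl] at hcoeff ⊢
    have hSl : S l = (q/p)^l / (N.choose l : ℝ) := by
      field_simp at hcoeff ⊢
      linarith [hcoeff]
    show S l = 1 / krawtchoukNorm N p q l
    rw [hSl]
    unfold krawtchoukNorm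
    rw [div_pow, div_pow]
    field_simp
  · rw [if_neg (fun h => hlm h.symm)] at hcoeff
    rw [if_neg hlm, zero_div]
    show S m = 0
    have := mul_eq_zero.mp hcoeff
    rcases this with h | h
    · exact absurd h hCm
    · exact h
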